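/- arXiv:math/0604280 — 2 statements merged into one kernel-verified Lean document; each statement's English description precedes it below -/
import Mathlib

section
/- For every natural number n, F_{2n+2} = Σ_{j ∈ ℤ} [ C(2n+1, n-5j) - C(2n+1, n-5j-2) ]. -/
/-- Binomial coefficient `C(m, j)` with integer lower index, zero when `j < 0`. -/
def icho (m : ℕ) (j : ℤ) : ℤ := if 0 ≤ j then (m.choose j.toNat : ℤ) else 0

lemma icho_eq_zero_of_lt {m : ℕ} {j : ℤ} (h : (m : ℤ) < j) : icho m j = 0 := by
  unfold icho
  split
  · norm_cast
    apply Nat.choose_eq_zero_of_lt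
    omega
  · rfl

lemma icho_eq_zero_of_neg {m : ℕ} {j : ℤ} (h : j < 0) : icho m j = 0 := by
  unfold icho; split <;> [omega; rfl]

lemma icho_pascal (m : ℕ) (k : ℤ) : icho (m+1) k = icho m k + icho m (k-1) := by
  rcases lt_trichotomy k 0 with h | h | h
  · rw [icho_eq_zero_of_neg h, icho_eq_zero_of_neg h, icho_eq_zero_of_neg (by omega)]
    ring
  · subst h
    simp [icho]
  · have hk : k = ((k.toNat - 1 : ℕ) : ℤ) + 1 := by omega
    rw [hk]
    unfold icho
    rw [if_pos (by omega), if_pos (by omega), if_pos (by omega)]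
    have h1 : (((k.toNat - 1 : ℕ) : ℤ) + 1).toNat = (k.toNat - 1) + 1 := by omega
    have h2 : (((k.toNat - 1 : ℕ) : ℤ) + 1 - 1).toNat = k.toNat - 1 := by omega
    rw [h1, h2, Nat.choose_succ_succ']
    push_cast
    ring

noncomputable def H (m : ℕ) (a : ℤ) : ℤ := ∑ᶠ j : ℤ, icho m (a - 5 * j)

lemma H_support (m : ℕ) (a : ℤ) :
    (Function.support fun j : ℤ => icho m (a - 5 * j)).Finite := by
  apply Set.Finite.subset (Set.finite_Icc (-(|a| + m)) (|a| + m))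
  intro j hj
  simp only [Function.mem_support] at hj
  have h1 : 0 ≤ a - 5 * j := by
    by_contra h
    exact hj (icho_eq_zero_of_neg (by omega))
  have h2 : a - 5 * j ≤ m := by
    by_contra h
    exact hj (icho_eq_zero_of_lt (by omega))
  simp only [Set.mem_Icc]
  rcases abs_cases a with ⟨h3, h4⟩ | ⟨h3, h4⟩ <;> omega

lemma H_per (m : ℕ) (a : ℤ) : H m (a + 5) = H m a := by
  unfold H
  refine (finsum_eq_of_bijective (fun j : ℤ => j + 1) (Equiv.addRight 1).bijective
    fun j => ?_).symm
  show icho m (a - 5 * j) = icho m (a + 5 - 5 * (j + 1))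
  congr 1
  ring

lemma H_pascal (m : ℕ) (a : ℤ) : H (m + 1) a = H m a + H m (a - 1) := by
  unfold H
  rw [← finsum_add_distrib (H_support m a) (H_support m (a - 1))]
  apply finsum_congr
  intro j
  rw [icho_pascal, show a - 5 * j - 1 = a - 1 - 5 * j from by ring]

lemma H_pascal2 (m : ℕ) (b : ℤ) :
    H (m + 2) b = H m b + 2 * H m (b - 1) + H m (b - 2) := by
  rw [show m + 2 = m + 1 + 1 from by ring]
  simp only [H_pascal]
  ring_nf

lemma H_pascal4 (m : ℕ) (b : ℤ) :
    H (m + 4) b = H m b + 4 * H m (b-1) + 6 * H m (b-2) + 4 * H m (b-3) + H m (b-4) := by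
  rw [show m + 4 = m + 2 + 2 from by ring, H_pascal2, H_pascal2, H_pascal2, H_pascal2]
  ring_nf

lemma H_step (m : ℕ) (a : ℤ) :
    H (m+4) (a+2) - H (m+4) a
      = 3 * (H (m+2) (a+1) - H (m+2) (a-1)) - (H m a - H m (a-2)) := by
  have per1 : H m (a + 2) = H m (a - 3) := by
    have := H_per m (a - 3)
    rwa [show a - 3 + 5 = a + 2 from by ring] at this
  have per2 : H m (a + 1) = H m (a - 4) := by
    have := H_per m (a - 4)
    rwa [show a - 4 + 5 = a + 1 from by ring] at this
  rw [H_pascal4, H_pascal4, H_pascal2, H_pascal2]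
  ring_nf
  ring_nf at per1 per2
  linarith

lemma Hval1 : H 1 0 = 1 := by
  unfold H
  rw [finsum_eq_single _ (0 : ℤ) ?h]
  · norm_num [icho]
  case h =>
    intro x hx
    rcases lt_or_gt_of_ne hx with h | h
    · exact icho_eq_zero_of_lt (by omega)
    · exact icho_eq_zero_of_neg (by omega)

lemma Hval2 : H 1 (-2) = 0 := by
  unfold H
  apply finsum_eq_zero_of_forall_eq_zero
  intro x
  rcases le_or_gt 0 x with h | h
  · exact icho_eq_zero_of_neg (by omega)
  · exact icho_eq_zero_of_lt (by omega)

lemma Hval3 : H 3 1 = 3 := by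
  unfold H
  rw [finsum_eq_single _ (0 : ℤ) ?h]
  · norm_num [icho]
  case h =>
    intro x hx
    rcases lt_or_gt_of_ne hx with h | h
    · exact icho_eq_zero_of_lt (by omega)
    · exact icho_eq_zero_of_neg (by omega)

lemma Hval4 : H 3 (-1) = 0 := by
  unfold H
  apply finsum_eq_zero_of_forall_eq_zero
  intro x
  rcases le_or_gt 0 x with h | h
  · exact icho_eq_zero_of_neg (by omega)
  · exact icho_eq_zero_of_lt (by omega)

lemma key (n : ℕ) :
    ((Nat.fib (2*n+2) : ℤ) = H (2*n+1) n - H (2*n+1) ((n:ℤ) - 2)) ∧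
    ((Nat.fib (2*n+4) : ℤ) = H (2*n+3) ((n:ℤ) + 1) - H (2*n+3) ((n:ℤ) - 1)) := by
  induction n with
  | zero =>
    constructor
    · norm_num [Hval1, Hval2]
    · norm_num [Hval3, Hval4]
  | succ n ih =>
    obtain ⟨h1, h2⟩ := ih
    constructor
    · rw [show 2*(n+1)+2 = 2*n+4 from by ring, show 2*(n+1)+1 = 2*n+3 from by ring]
      push_cast
      rw [show ((n:ℤ)+1-2) = (n:ℤ)-1 from by ring]
      exact h2
    · rw [show 2*(n+1)+4 = 2*n+6 from by ring, show 2*(n+1)+3 = 2*n+1+4 from by ring]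
      push_cast
      rw [show ((n:ℤ)+1+1) = (n:ℤ)+2 from by ring, show ((n:ℤ)+1-1) = (n:ℤ) from by ring]
      have hf : (Nat.fib (2*n+6) : ℤ) = 3 * Nat.fib (2*n+4) - Nat.fib (2*n+2) := by
        have a1 := Nat.fib_add_two (n := 2*n+2)
        have a2 := Nat.fib_add_two (n := 2*n+3)
        have a3 := Nat.fib_add_two (n := 2*n+4)
        zify at a1 a2 a3
        ring_nf at a1 a2 a3 ⊢
        linarith
      rw [hf, H_step (2*n+1) (n:ℤ), show 2*n+1+2 = 2*n+3 from by ring]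
      linarith

/-- Identity (5): `F_{2n+2} = Σ_{j ∈ ℤ} [C(2n+1, n-5j) - C(2n+1, n-5j-2)]`. -/
theorem fib_even_binomial_sum' (n : ℕ) :
    (Nat.fib (2 * n + 2) : ℤ) =
      ∑ᶠ j : ℤ, (icho (2 * n + 1) ((n : ℤ) - 5 * j) - icho (2 * n + 1) ((n : ℤ) - 5 * j - 2)) := by
  have e : ∀ j : ℤ, (n:ℤ) - 5*j - 2 = ((n:ℤ) - 2) - 5*j := fun j => by ring
  simp only [e]
  rw [finsum_sub_distrib (H_support (2*n+1) (n:ℤ)) (H_support (2*n+1) ((n:ℤ)-2))]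
  exact (key n).1
end

section
/- For every natural number n ≥ 1, F_{n+1} = Σ_{j ∈ ℤ} [ T(n, 5j) - T(n, 5j-2) ], where T(n,k) denotes the trinomial coefficient. -/
/-- The trinomial coefficient `T(n,k)`: the coefficient of `x^(n+k)` in `(1+x+x²)^n`,
zero when `n + k < 0`. -/
noncomputable def trinom (n : ℕ) (k : ℤ) : ℤ :=
  if 0 ≤ (n : ℤ) + k then ((1 + Polynomial.X + Polynomial.X ^ 2 : Polynomial ℤ) ^ n).coeff ((n : ℤ) + k).toNat
  else 0

open Polynomial Finset

private lemma trinom_neg (n : ℕ) (k : ℤ) (h : (n : ℤ) + k < 0) : trinom n k = 0 := by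
  unfold trinom; rw [if_neg]; omega

private lemma trinom_coeff (n : ℕ) (m : ℕ) :
    ((1 + X + X ^ 2 : Polynomial ℤ) ^ n).coeff m = trinom n ((m : ℤ) - n) := by
  unfold trinom
  rw [if_pos (by omega)]
  congr 1
  omega

private lemma trinom_eq_zero (n : ℕ) (k : ℤ) (h : (n : ℤ) < |k|) : trinom n k = 0 := by
  unfold trinom
  split_ifs with h0
  · apply Polynomial.coeff_eq_zero_of_natDegree_lt
    have hd : ((1 + X + X ^ 2 : Polynomial ℤ) ^ n).natDegree ≤ 2 * n := by
      calc ((1 + X + X ^ 2 : Polynomial ℤ) ^ n).natDegree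
          ≤ n * (1 + X + X ^ 2 : Polynomial ℤ).natDegree := Polynomial.natDegree_pow_le
        _ ≤ n * 2 := by
            apply Nat.mul_le_mul_left
            compute_degree
        _ = 2 * n := by ring
    have h1 : (((n : ℤ) + k).toNat : ℤ) = (n : ℤ) + k := Int.toNat_of_nonneg h0
    rcases abs_cases k with ⟨e, _⟩ | ⟨e, _⟩ <;> omega
  · rfl

private lemma trinom_rec (n : ℕ) (k : ℤ) :
    trinom (n + 1) k = trinom n (k - 1) + trinom n k + trinom n (k + 1) := by
  by_cases h : 0 ≤ (n : ℤ) + 1 + k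
  · set m : ℕ := ((n : ℤ) + 1 + k).toNat with hm
    have hmk : ((n : ℤ) + 1 + k) = m := (Int.toNat_of_nonneg h).symm
    have hL : trinom (n + 1) k = ((1 + X + X ^ 2 : Polynomial ℤ) ^ (n + 1)).coeff m := by
      rw [trinom_coeff]; congr 1; push_cast; omega
    rw [hL, pow_succ, mul_add, mul_add, mul_one, coeff_add, coeff_add]
    have hX : ((1 + X + X ^ 2 : Polynomial ℤ) ^ n * X).coeff m
        = if 1 ≤ m then ((1 + X + X ^ 2 : Polynomial ℤ) ^ n).coeff (m - 1) else 0 := by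
      rw [← pow_one (X : Polynomial ℤ), coeff_mul_X_pow']
    have hX2 : ((1 + X + X ^ 2 : Polynomial ℤ) ^ n * X ^ 2).coeff m
        = if 2 ≤ m then ((1 + X + X ^ 2 : Polynomial ℤ) ^ n).coeff (m - 2) else 0 := by
      rw [coeff_mul_X_pow']
    rw [hX, hX2]
    have e1 : ((1 + X + X ^ 2 : Polynomial ℤ) ^ n).coeff m = trinom n (k + 1) := by
      rw [trinom_coeff]; congr 1; omega
    rw [e1]
    by_cases h1 : 1 ≤ m
    · have e2 : ((1 + X + X ^ 2 : Polynomial ℤ) ^ n).coeff (m - 1) = trinom n k := by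
        rw [trinom_coeff]; congr 1; push_cast; omega
      rw [if_pos h1, e2]
      by_cases h2 : 2 ≤ m
      · have e3 : ((1 + X + X ^ 2 : Polynomial ℤ) ^ n).coeff (m - 2) = trinom n (k - 1) := by
          rw [trinom_coeff]; congr 1; push_cast; omega
        rw [if_pos h2, e3]; ring
      · rw [if_neg h2, trinom_neg n (k - 1) (by omega)]; ring
    · rw [if_neg h1, if_neg (by omega), trinom_neg n k (by omega),
        trinom_neg n (k - 1) (by omega)]
      ring
  · rw [trinom_neg _ k (by push_cast; omega), trinom_neg n (k - 1) (by omega),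
      trinom_neg n k (by omega), trinom_neg n (k + 1) (by omega)]
    ring

private lemma trinom_symm (n : ℕ) (k : ℤ) : trinom n (-k) = trinom n k := by
  induction n generalizing k with
  | zero =>
    by_cases hk : k = 0
    · subst hk; norm_num
    · rw [trinom_eq_zero 0 (-k) (by simp; omega), trinom_eq_zero 0 k (by simp; omega)]
  | succ n ih =>
    rw [trinom_rec, trinom_rec, show -k - 1 = -(k + 1) by ring, show -k + 1 = -(k - 1) by ring,
      ih, ih, ih]
    ring

/-- Sum of trinomial coefficients over a residue class mod 5. -/
private noncomputable def S (n : ℕ) (r : ℤ) : ℤ := ∑ j ∈ Icc (-(n : ℤ)) n, trinom n (5 * j + r)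

private lemma trinom_term_zero (n : ℕ) (hn : 1 ≤ n) (r j : ℤ) (hr : |r| ≤ 3)
    (hj : j ∉ Icc (-(n : ℤ)) n) : trinom n (5 * j + r) = 0 := by
  apply trinom_eq_zero
  simp only [Finset.mem_Icc, not_and_or, not_le] at hj
  rw [abs_le] at hr
  rcases abs_cases (5 * j + r) with ⟨e, _⟩ | ⟨e, _⟩ <;> omega

private lemma sum_window (n : ℕ) (hn : 1 ≤ n) (r : ℤ) (hr : |r| ≤ 3)
    (s : Finset ℤ) (hs : Icc (-(n : ℤ)) n ⊆ s) :
    ∑ j ∈ s, trinom n (5 * j + r) = S n r := by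
  symm
  apply Finset.sum_subset hs
  intro j _ hj
  exact trinom_term_zero n hn r j hr hj

private lemma S_neg (n : ℕ) (r : ℤ) : S n (-r) = S n r := by
  unfold S
  apply Finset.sum_nbij' (fun j => -j) (fun j => -j)
  · intro a ha; simp only [Finset.mem_Icc] at *; omega
  · intro a ha; simp only [Finset.mem_Icc] at *; omega
  · intro a _; ring
  · intro a _; ring
  · intro a _
    rw [← trinom_symm n (5 * -a + r)]
    congr 1
    ring

private lemma S_shift (n : ℕ) (hn : 1 ≤ n) : S n (-3) = S n (-2) := by
  have h1 : S n (-3) = ∑ j ∈ Icc (-(n : ℤ) - 1) ((n : ℤ) + 1), trinom n (5 * j + -3) := by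
    rw [sum_window n hn (-3) (by norm_num) _ (by
      intro x hx; simp only [Finset.mem_Icc] at *; omega)]
  have h2 : ∑ j ∈ Icc (-(n : ℤ) - 1) ((n : ℤ) + 1), trinom n (5 * j + -3)
      = ∑ j ∈ Icc (-(n : ℤ) - 2) (n : ℤ), trinom n (5 * j + 2) := by
    apply Finset.sum_nbij' (fun j => j - 1) (fun j => j + 1)
    · intro a ha; simp only [Finset.mem_Icc] at *; omega
    · intro a ha; simp only [Finset.mem_Icc] at *; omega
    · intro a _; ring
    · intro a _; ring
    · intro a _; congr 1; ring
  have h3 : ∑ j ∈ Icc (-(n : ℤ) - 2) (n : ℤ), trinom n (5 * j + 2) = S n 2 := by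
    apply sum_window n hn 2 (by norm_num)
    intro x hx; simp only [Finset.mem_Icc] at *; omega
  rw [h1, h2, h3, ← S_neg]

private lemma S_succ (n : ℕ) (hn : 1 ≤ n) (r : ℤ) (hr : -2 ≤ r) (hr' : r ≤ 0) :
    S (n + 1) r = S n (r - 1) + S n r + S n (r + 1) := by
  have key : S (n + 1) r = ∑ j ∈ Icc (-((n : ℤ) + 1)) ((n : ℤ) + 1),
      (trinom n (5 * j + (r - 1)) + trinom n (5 * j + r) + trinom n (5 * j + (r + 1))) := by
    unfold S
    push_cast
    apply Finset.sum_congr rfl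
    intro j _
    rw [trinom_rec]
    congr 2 <;> [skip; ring] <;> congr 1 <;> ring
  rw [key, Finset.sum_add_distrib, Finset.sum_add_distrib]
  have hsub : Icc (-(n : ℤ)) (n : ℤ) ⊆ Icc (-((n : ℤ) + 1)) ((n : ℤ) + 1) := by
    intro x hx; simp only [Finset.mem_Icc] at *; omega
  rw [sum_window n hn (r - 1) (by rw [abs_le]; omega) _ hsub,
    sum_window n hn r (by rw [abs_le]; omega) _ hsub,
    sum_window n hn (r + 1) (by rw [abs_le]; omega) _ hsub]

private lemma S_one : S 1 0 = 1 ∧ S 1 (-1) = 1 ∧ S 1 (-2) = 0 := by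
  have hset : Icc (-(1 : ℤ)) 1 = {-1, 0, 1} := by decide
  have hco : ∀ m : ℕ, ((1 + X + X ^ 2 : Polynomial ℤ) ^ 1).coeff m
      = if m = 0 then 1 else if m = 1 then 1 else if m = 2 then 1 else 0 := by
    intro m
    rw [pow_one, coeff_add, coeff_add, coeff_one, coeff_X, coeff_X_pow]
    split_ifs <;> omega
  have ht : ∀ k : ℤ, trinom 1 k = if k = -1 ∨ k = 0 ∨ k = 1 then 1 else 0 := by
    intro k
    unfold trinom
    split_ifs with h h2 h3
    · rw [hco]
      have := Int.toNat_of_nonneg h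
      split_ifs <;> omega
    · rw [hco]
      have := Int.toNat_of_nonneg h
      split_ifs <;> omega
    · omega
    · rfl
  refine ⟨?_, ?_, ?_⟩ <;>
    simp [S, hset, ht] <;> decide

private lemma S_main (n : ℕ) (hn : 1 ≤ n) :
    S n 0 - S n (-2) = Nat.fib (n + 1) ∧ S n (-1) - S n (-2) = Nat.fib n := by
  induction n, hn using Nat.le_induction with
  | base =>
    obtain ⟨h0, h1, h2⟩ := S_one
    rw [h0, h1, h2]
    norm_num
  | succ n hn ih =>
    obtain ⟨ha, hb⟩ := ih
    have e0 : S (n + 1) 0 = S n (-1) + S n 0 + S n 1 := by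
      have := S_succ n hn 0 (by norm_num) (by norm_num)
      simpa using this
    have e1 : S (n + 1) (-1) = S n (-2) + S n (-1) + S n 0 := by
      have := S_succ n hn (-1) (by norm_num) (by norm_num)
      norm_num at this
      convert this using 3 <;> norm_num
    have e2 : S (n + 1) (-2) = S n (-3) + S n (-2) + S n (-1) := by
      have := S_succ n hn (-2) (by norm_num) (by norm_num)
      convert this using 3 <;> norm_num
    have hs1 : S n 1 = S n (-1) := by
      have := S_neg n (-1)
      norm_num at this
      exact this
    have hs3 : S n (-3) = S n (-2) := S_shift n hn
    constructor
    · rw [e0, e2, hs1, hs3]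
      rw [Nat.fib_add_two]
      push_cast
      omega
    · rw [e1, e2, hs3]
      omega

/-- Identity (10): `F_{n+1} = Σ_{j ∈ ℤ} [T(n, 5j) - T(n, 5j-2)]` for `n ≥ 1`. -/
theorem fib_trinomial_sum' (n : ℕ) (hn : 1 ≤ n) :
    (Nat.fib (n + 1) : ℤ) = ∑ᶠ j : ℤ, (trinom n (5 * j) - trinom n (5 * j - 2)) := by
  have hsupp : Function.support (fun j : ℤ => trinom n (5 * j) - trinom n (5 * j - 2))
      ⊆ (Icc (-(n : ℤ)) n : Finset ℤ) := by
    intro j hj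
    by_contra hmem
    apply hj
    have h1 : trinom n (5 * j) = 0 := by
      have := trinom_term_zero n hn 0 j (by norm_num) hmem
      simpa using this
    have h2 : trinom n (5 * j - 2) = 0 := by
      have := trinom_term_zero n hn (-2) j (by norm_num) hmem
      rw [show 5 * j - 2 = 5 * j + -2 by ring]
      exact this
    simp [h1, h2]
  rw [finsum_eq_sum_of_support_subset _ hsupp, Finset.sum_sub_distrib]
  have g1 : ∑ j ∈ Icc (-(n : ℤ)) n, trinom n (5 * j) = S n 0 := by
    unfold S
    apply Finset.sum_congr rfl
    intro j _
    norm_num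
  have g2 : ∑ j ∈ Icc (-(n : ℤ)) n, trinom n (5 * j - 2) = S n (-2) := by
    unfold S
    apply Finset.sum_congr rfl
    intro j _
    rw [sub_eq_add_neg]
  rw [g1, g2, (S_main n hn).1]
end
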